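/- Let F(x,X) be the determinant of the 5×5 matrix whose i-th column is (1, xᵢ², xᵢ⁴, xᵢXᵢ, Xᵢ²). For all x₁,…,x₅ ∈ ℂ and all μ, λ ∈ ℂ, one has F(x₁,…,x₅, μ·x₂x₃x₄x₅ + λx₁³, μ·x₁x₃x₄x₅ + λx₂³, μ·x₁x₂x₄x₅ + λx₃³, μ·x₁x₂x₃x₅ + λx₄³, μ·x₁x₂x₃x₄ + λx₅³) = 0. (Hence the line a₆ in ℙ(ℂ⁵/⟨x⟩) spanned by the images of (x₁⁻¹,…,x₅⁻¹) and (x₁³,…,x₅³) lies on the cubic surface F(x,·)=0.) -/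
import Mathlib
open Matrix Finset Function
set_option maxHeartbeats 2000000 in
lemma det_fin_four (A : Matrix (Fin 4) (Fin 4) ℂ) :
    A.det =
      A 0 0 * (A 1 1 * (A 2 2 * A 3 3 - A 2 3 * A 3 2) - A 1 2 * (A 2 1 * A 3 3 - A 2 3 * A 3 1)
        + A 1 3 * (A 2 1 * A 3 2 - A 2 2 * A 3 1))
      - A 0 1 * (A 1 0 * (A 2 2 * A 3 3 - A 2 3 * A 3 2) - A 1 2 * (A 2 0 * A 3 3 - A 2 3 * A 3 0)
        + A 1 3 * (A 2 0 * A 3 2 - A 2 2 * A 3 0))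
      + A 0 2 * (A 1 0 * (A 2 1 * A 3 3 - A 2 3 * A 3 1) - A 1 1 * (A 2 0 * A 3 3 - A 2 3 * A 3 0)
        + A 1 3 * (A 2 0 * A 3 1 - A 2 1 * A 3 0))
      - A 0 3 * (A 1 0 * (A 2 1 * A 3 2 - A 2 2 * A 3 1) - A 1 1 * (A 2 0 * A 3 2 - A 2 2 * A 3 0)
        + A 1 2 * (A 2 0 * A 3 1 - A 2 1 * A 3 0)) := by
  simp only [det_succ_row_zero, ← Nat.not_even_iff_odd, submatrix_apply, Fin.succ_zero_eq_one,
    submatrix_submatrix, det_unique, Fin.default_eq_zero, Function.comp_apply, Fin.succ_one_eq_two,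
    Fin.sum_univ_succ, Fin.val_zero, Fin.zero_succAbove, univ_unique, Fin.val_succ,
    Fin.val_eq_zero, Fin.succ_succAbove_zero, sum_singleton, Fin.succ_succAbove_one, Even.add_self]
  norm_num [Fin.succ_succAbove_succ, show (Fin.succ 2 : Fin 4) = 3 by decide,
    show ((2:Fin 4).succAbove (2:Fin 3)) = 3 by decide, show ((3:Fin 4).succAbove (2:Fin 3)) = 2 by decide,
    show ((1:Fin 4).succAbove (2:Fin 3)) = 3 by decide, show ((0:Fin 4).succAbove (2:Fin 3)) = 3 by decide,
    show ((2:Fin 3).succAbove 0) = 0 by decide, show ((2:Fin 3).succAbove 1) = 1 by decide,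
    show ((1:Fin 3).succAbove 0) = 0 by decide, show ((1:Fin 3).succAbove 1) = 2 by decide,
    show ((0:Fin 3).succAbove 0) = 1 by decide, show ((0:Fin 3).succAbove 1) = 2 by decide]
  ring

/-- The determinant `F(x,X)` of the 5×5 matrix whose `i`-th column is
`(1, xᵢ², xᵢ⁴, xᵢXᵢ, Xᵢ²)`. -/
noncomputable def F (x X : Fin 5 → ℂ) : ℂ :=
  Matrix.det (Matrix.of fun (i j : Fin 5) =>
    ![(1 : ℂ), x j ^ 2, x j ^ 4, x j * X j, X j ^ 2] i)

lemma p_erase (x : Fin 5 → ℂ) (i : Fin 5) :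
    x i * ∏ j ∈ Finset.univ.erase i, x j = x 0 * x 1 * x 2 * x 3 * x 4 := by
  rw [Finset.mul_prod_erase _ _ (Finset.mem_univ i), Fin.prod_univ_five]

lemma e0 (x : Fin 5 → ℂ) : ∏ j ∈ Finset.univ.erase (0 : Fin 5), x j = x 1 * x 2 * x 3 * x 4 := by
  rw [show Finset.univ.erase (0 : Fin 5) = {1,2,3,4} by decide]
  simp [Finset.prod_insert, Finset.mem_insert]; ring

lemma e1 (x : Fin 5 → ℂ) : ∏ j ∈ Finset.univ.erase (1 : Fin 5), x j = x 0 * x 2 * x 3 * x 4 := by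
  rw [show Finset.univ.erase (1 : Fin 5) = {0,2,3,4} by decide]
  simp [Finset.prod_insert, Finset.mem_insert]; ring

lemma e2 (x : Fin 5 → ℂ) : ∏ j ∈ Finset.univ.erase (2 : Fin 5), x j = x 0 * x 1 * x 3 * x 4 := by
  rw [show Finset.univ.erase (2 : Fin 5) = {0,1,3,4} by decide]
  simp [Finset.prod_insert, Finset.mem_insert]; ring

lemma e3 (x : Fin 5 → ℂ) : ∏ j ∈ Finset.univ.erase (3 : Fin 5), x j = x 0 * x 1 * x 2 * x 4 := by
  rw [show Finset.univ.erase (3 : Fin 5) = {0,1,2,4} by decide]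
  simp [Finset.prod_insert, Finset.mem_insert]; ring

lemma e4 (x : Fin 5 → ℂ) : ∏ j ∈ Finset.univ.erase (4 : Fin 5), x j = x 0 * x 1 * x 2 * x 3 := by
  rw [show Finset.univ.erase (4 : Fin 5) = {0,1,2,3} by decide]
  simp [Finset.prod_insert, Finset.mem_insert]; ring

set_option maxHeartbeats 4000000 in
/-- For all `μ, λ ∈ ℂ`, `F(x, (μ·∏_{j≠1}xⱼ + λx₁³, …, μ·∏_{j≠5}xⱼ + λx₅³)) = 0`:
the line `a₆` spanned by `(x₁⁻¹,…,x₅⁻¹)` and `(x₁³,…,x₅³)` lies on the cubic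
surface `F(x,·) = 0`. -/
theorem line_a6_on_cubic (x : Fin 5 → ℂ) (μ l : ℂ) :
    F x (fun i => μ * (∏ j ∈ Finset.univ.erase i, x j) + l * x i ^ 3) = 0 := by
  unfold F
  rw [Matrix.det_succ_row_zero, Fin.sum_univ_five]
  simp only [det_fin_four, Matrix.submatrix_apply, Matrix.of_apply,
    show (Fin.succ (0:Fin 4)) = 1 by decide,
    show (Fin.succ (1:Fin 4)) = 2 by decide,
    show (Fin.succ (2:Fin 4)) = 3 by decide,
    show (Fin.succ (3:Fin 4)) = 4 by decide,
    show ((0:Fin 5).succAbove (0:Fin 4)) = 1 by decide,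
    show ((0:Fin 5).succAbove (1:Fin 4)) = 2 by decide,
    show ((0:Fin 5).succAbove (2:Fin 4)) = 3 by decide,
    show ((0:Fin 5).succAbove (3:Fin 4)) = 4 by decide,
    show ((1:Fin 5).succAbove (0:Fin 4)) = 0 by decide,
    show ((1:Fin 5).succAbove (1:Fin 4)) = 2 by decide,
    show ((1:Fin 5).succAbove (2:Fin 4)) = 3 by decide,
    show ((1:Fin 5).succAbove (3:Fin 4)) = 4 by decide,
    show ((2:Fin 5).succAbove (0:Fin 4)) = 0 by decide,
    show ((2:Fin 5).succAbove (1:Fin 4)) = 1 by decide,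
    show ((2:Fin 5).succAbove (2:Fin 4)) = 3 by decide,
    show ((2:Fin 5).succAbove (3:Fin 4)) = 4 by decide,
    show ((3:Fin 5).succAbove (0:Fin 4)) = 0 by decide,
    show ((3:Fin 5).succAbove (1:Fin 4)) = 1 by decide,
    show ((3:Fin 5).succAbove (2:Fin 4)) = 2 by decide,
    show ((3:Fin 5).succAbove (3:Fin 4)) = 4 by decide,
    show ((4:Fin 5).succAbove (0:Fin 4)) = 0 by decide,
    show ((4:Fin 5).succAbove (1:Fin 4)) = 1 by decide,
    show ((4:Fin 5).succAbove (2:Fin 4)) = 2 by decide,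
    show ((4:Fin 5).succAbove (3:Fin 4)) = 3 by decide,
    Matrix.cons_val_zero, Matrix.cons_val_one, Matrix.head_cons,
    Matrix.cons_val_two, Matrix.cons_val_three, Matrix.cons_val_four,
    Matrix.tail_cons, Matrix.head_fin_const, Fin.val_zero, Fin.val_one,
    show ((2:Fin 5):ℕ) = 2 by decide, show ((3:Fin 5):ℕ) = 3 by decide,
    show ((4:Fin 5):ℕ) = 4 by decide, pow_succ, pow_zero]
  simp only [e0 x, e1 x, e2 x, e3 x, e4 x]
  ring
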